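/- Let S be an o-minimal structure on the real field and f: (a,b) → ℝ a function belonging to S. Then f is differentiable at all but finitely many points of (a,b). -/

import Mathlib

/-- A structure on the real field `(ℝ,+,·)`: a sequence of boolean algebras of subsets of
`ℝⁿ` containing `ℝⁿ` and the diagonals, closed under products with `ℝ` on either side and
under coordinate projections, and containing the graphs of addition and multiplication. -/
structure RealStructure where
  sets : (n : ℕ) → Set (Set (Fin n → ℝ))
  univ_mem : ∀ n, Set.univ ∈ sets n
  union_mem : ∀ n, ∀ A ∈ sets n, ∀ B ∈ sets n, A ∪ B ∈ sets n
  compl_mem : ∀ n, ∀ A ∈ sets n, Aᶜ ∈ sets n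
  diag_mem : ∀ (n : ℕ) (i j : Fin n), {x : Fin n → ℝ | x i = x j} ∈ sets n
  prod_right_mem : ∀ n, ∀ A ∈ sets n,
    {x : Fin (n + 1) → ℝ | (fun i : Fin n => x i.castSucc) ∈ A} ∈ sets (n + 1)
  prod_left_mem : ∀ n, ∀ A ∈ sets n,
    {x : Fin (n + 1) → ℝ | (fun i : Fin n => x i.succ) ∈ A} ∈ sets (n + 1)
  proj_mem : ∀ n, ∀ A ∈ sets (n + 1),
    (fun (x : Fin (n + 1) → ℝ) (i : Fin n) => x i.castSucc) '' A ∈ sets n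
  add_mem : {x : Fin 3 → ℝ | x 0 + x 1 = x 2} ∈ sets 3
  mul_mem : {x : Fin 3 → ℝ | x 0 * x 1 = x 2} ∈ sets 3

/-- A map `f : A → ℝⁿ`, `A ⊆ ℝᵐ`, belongs to the structure `S` if its graph belongs to
`S_{m+n}`. -/
def RealStructure.FnIn (S : RealStructure) {m n : ℕ}
    (A : Set (Fin m → ℝ)) (f : (Fin m → ℝ) → (Fin n → ℝ)) : Prop :=
  {z : Fin (m + n) → ℝ | ∃ x ∈ A, z = Fin.append x (f x)} ∈ S.sets (m + n)

/-- A real-valued function `f : A → ℝ`, `A ⊆ ℝⁿ`, belongs to `S` if its graph belongs to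
`S_{n+1}`. -/
def RealStructure.Fn1In (S : RealStructure) {n : ℕ}
    (A : Set (Fin n → ℝ)) (f : (Fin n → ℝ) → ℝ) : Prop :=
  {z : Fin (n + 1) → ℝ | ∃ x ∈ A, z = Fin.snoc x (f x)} ∈ S.sets (n + 1)

/-- A one-variable function `f : D → ℝ`, `D ⊆ ℝ`, belongs to `S` if its graph belongs to
`S_2`. -/
def RealStructure.Fn1dIn (S : RealStructure) (D : Set ℝ) (f : ℝ → ℝ) : Prop :=
  {z : Fin 2 → ℝ | z 0 ∈ D ∧ f (z 0) = z 1} ∈ S.sets 2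

/-- A subset of `ℝ` is an interval (of any kind, possibly unbounded) or a point. -/
def IsIntervalOrPt (I : Set ℝ) : Prop :=
  (∃ a : ℝ, I = {a}) ∨ (∃ a b : ℝ, I = Set.Ioo a b) ∨ (∃ a : ℝ, I = Set.Ioi a) ∨
    (∃ a : ℝ, I = Set.Iio a) ∨ I = Set.univ ∨ I = ∅

/-- A structure on `(ℝ,+,·)` is o-minimal if the sets of `S_1` are exactly the finite
unions of points and intervals of all kinds. -/
def RealStructure.IsOMinimal (S : RealStructure) : Prop :=
  ∀ A : Set ℝ, ({x : Fin 1 → ℝ | x 0 ∈ A} ∈ S.sets 1 ↔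
    ∃ T : Finset (Set ℝ), (∀ I ∈ T, IsIntervalOrPt I) ∧ A = ⋃₀ (T : Set (Set ℝ)))

/-- A structure is polynomially bounded if every definable `f : ℝ → ℝ` is `O(t^N)` as
`t → +∞` for some `N ∈ ℕ`. -/
def RealStructure.IsPolyBounded (S : RealStructure) : Prop :=
  ∀ f : ℝ → ℝ, ({z : Fin 2 → ℝ | f (z 0) = z 1} ∈ S.sets 2) →
    ∃ (N : ℕ) (C : ℝ), ∀ᶠ t in Filter.atTop, |f t| ≤ C * t ^ N


-- ===== auxiliary development =====

namespace RealStructure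
variable {S : RealStructure}

def DefPred (S : RealStructure) (n : ℕ) (P : (Fin n → ℝ) → Prop) : Prop :=
  {x | P x} ∈ S.sets n

lemma DefPred.congr {n} {P Q : (Fin n → ℝ) → Prop} (h : ∀ x, P x ↔ Q x)
    (hP : S.DefPred n P) : S.DefPred n Q := by
  have : {x | P x} = {x | Q x} := Set.ext fun x => h x
  rwa [DefPred, ← this]

lemma DefPred.or {n} {P Q} (hP : S.DefPred n P) (hQ : S.DefPred n Q) :
    S.DefPred n (fun x => P x ∨ Q x) := S.union_mem n _ hP _ hQ

lemma DefPred.not {n} {P} (hP : S.DefPred n P) : S.DefPred n (fun x => ¬ P x) :=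
  S.compl_mem n _ hP

lemma DefPred.and {n} {P Q} (hP : S.DefPred n P) (hQ : S.DefPred n Q) :
    S.DefPred n (fun x => P x ∧ Q x) := by
  have := (hP.not.or hQ.not).not
  exact this.congr (fun x => by tauto)

lemma DefPred.imp {n} {P Q} (hP : S.DefPred n P) (hQ : S.DefPred n Q) :
    S.DefPred n (fun x => P x → Q x) := (hP.not.or hQ).congr (fun x => by tauto)

lemma DefPred.cast {m n} (h : m = n) {P} (hP : S.DefPred m P) :
    S.DefPred n (fun x => P (x ∘ Fin.cast h)) := by
  subst h
  exact hP.congr (fun x => by rw [Fin.cast_refl]; exact Iff.rfl)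

lemma DefPred.liftFront {m} (k : ℕ) {P} (hP : S.DefPred m P) :
    S.DefPred (m + k) (fun z => P (fun j : Fin m => z ⟨k + j.1, by omega⟩)) := by
  induction k with
  | zero =>
      refine hP.congr (fun x => ?_)
      have : (fun j : Fin m => x ⟨0 + j.1, by omega⟩) = x := by
        funext j; exact congrArg x (Fin.ext (by simp))
      rw [this]
  | succ k ih =>
      have h2 := S.prod_left_mem (m + k) _ ih
      refine DefPred.congr (fun z => ?_) h2
      show P _ ↔ P _
      have : (fun j : Fin m => (fun i : Fin (m+k) => z i.succ) ⟨k + j.1, by omega⟩)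
           = (fun j : Fin m => z ⟨k + 1 + j.1, by omega⟩) := by
        funext j; exact congrArg z (Fin.ext (by simp [Fin.succ]; omega))
      rw [this]

lemma DefPred.exLast {n} {P} (hP : S.DefPred (n+1) P) :
    S.DefPred n (fun x => ∃ t, P (Fin.snoc x t)) := by
  have h := S.proj_mem n _ hP
  refine DefPred.congr (fun x => ?_) h
  constructor
  · rintro ⟨z, hz, rfl⟩
    refine ⟨z (Fin.last n), ?_⟩
    have : (Fin.snoc (fun i : Fin n => z i.castSucc) (z (Fin.last n)) : Fin (n+1) → ℝ) = z :=
      Fin.snoc_init_self z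
    rw [this]; exact hz
  · rintro ⟨t, ht⟩
    refine ⟨Fin.snoc x t, ht, ?_⟩
    funext i; simp

lemma DefPred.allLast {n} {P} (hP : S.DefPred (n+1) P) :
    S.DefPred n (fun x => ∀ t, P (Fin.snoc x t)) := by
  have := hP.not.exLast.not
  exact this.congr (fun x => by push_neg; exact Iff.rfl)

lemma DefPred.iInterFin {m k : ℕ} {F : Fin m → (Fin k → ℝ) → Prop}
    (h : ∀ j, S.DefPred k (F j)) : S.DefPred k (fun x => ∀ j, F j x) := by
  induction m with
  | zero => exact DefPred.congr (fun x => by simp) (S.univ_mem k)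
  | succ m ih =>
      have h2 := (h 0).and (ih (fun j => h j.succ))
      exact h2.congr (fun x => (Fin.forall_fin_succ).symm)

lemma DefPred.exAppend {n : ℕ} (k : ℕ) {P} (hP : S.DefPred (n + k) P) :
    S.DefPred n (fun x => ∃ y : Fin k → ℝ, P (Fin.append x y)) := by
  induction k with
  | zero =>
      refine hP.congr (fun x => ?_)
      constructor
      · intro h
        refine ⟨Fin.elim0, ?_⟩
        rw [Fin.append_elim0]
        exact h
      · rintro ⟨y, hy⟩
        have : y = Fin.elim0 := Subsingleton.elim _ _
        rw [this, Fin.append_elim0] at hy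
        exact hy
  | succ k ih =>
      have h1 : S.DefPred (n + k) (fun w => ∃ t, P (Fin.snoc w t)) := hP.exLast
      have h2 := ih h1
      refine h2.congr (fun x => ?_)
      constructor
      · rintro ⟨y, t, hyt⟩
        exact ⟨Fin.snoc y t, by rw [Fin.append_snoc]; exact hyt⟩
      · rintro ⟨y, hy⟩
        refine ⟨Fin.init y, y (Fin.last k), ?_⟩
        rw [← Fin.append_snoc, Fin.snoc_init_self]
        exact hy

/-- The fundamental reindexing lemma. -/
lemma DefPred.reindex {m n} (σ : Fin m → Fin n) {P} (hP : S.DefPred m P) :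
    S.DefPred n (fun x => P (x ∘ σ)) := by
  have h1 := hP.liftFront n
  have h2 := h1.cast (Nat.add_comm m n)
  have h3 : S.DefPred (n + m) (fun z =>
      ∀ j : Fin m, z (Fin.castAdd m (σ j)) = z (Fin.natAdd n j)) :=
    DefPred.iInterFin (fun j => S.diag_mem (n+m) _ _)
  have h4 := h2.and h3
  have h5 := h4.exAppend (n := n) m
  refine h5.congr (fun x => ?_)
  constructor
  · rintro ⟨y, hy, hdiag⟩
    have hyx : ∀ j : Fin m, y j = x (σ j) := by
      intro j
      have := hdiag j
      rw [Fin.append_left, Fin.append_right] at this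
      exact this.symm
    have : (x ∘ σ) = (fun j : Fin m => (Fin.append x y ∘ Fin.cast (Nat.add_comm m n)) ⟨n + j.1, by omega⟩) := by
      funext j
      have : (Fin.append x y ∘ Fin.cast (Nat.add_comm m n)) ⟨n + j.1, by omega⟩
           = Fin.append x y (Fin.natAdd n j) := by
        apply congrArg (Fin.append x y)
        exact Fin.ext (by simp)
      rw [this, Fin.append_right, hyx]
      rfl
    rw [this]; exact hy
  · intro h
    refine ⟨x ∘ σ, ?_, ?_⟩
    · have : (fun j : Fin m => (Fin.append x (x ∘ σ) ∘ Fin.cast (Nat.add_comm m n)) ⟨n + j.1, by omega⟩)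
           = x ∘ σ := by
        funext j
        have h1 : (Fin.append x (x ∘ σ) ∘ Fin.cast (Nat.add_comm m n)) ⟨n + j.1, by omega⟩
             = Fin.append x (x ∘ σ) (Fin.natAdd n j) := by
          apply congrArg (Fin.append x (x ∘ σ))
          exact Fin.ext (by simp)
        rw [h1, Fin.append_right]
      rw [this]; exact h
    · intro j
      rw [Fin.append_left, Fin.append_right]
      rfl

end RealStructure


namespace RealStructure
variable {S : RealStructure}

/-- finite unions of intervals and points -/
def IsFUIP (A : Set ℝ) : Prop :=
  ∃ T : Finset (Set ℝ), (∀ I ∈ T, IsIntervalOrPt I) ∧ A = ⋃₀ (T : Set (Set ℝ))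

lemma IsFUIP.of_interval {A : Set ℝ} (h : IsIntervalOrPt A) : IsFUIP A :=
  ⟨{A}, by simp [h], by simp⟩

lemma isFUIP_singleton (c : ℝ) : IsFUIP {c} := .of_interval (Or.inl ⟨c, rfl⟩)
lemma isFUIP_Ioo (c d : ℝ) : IsFUIP (Set.Ioo c d) := .of_interval (Or.inr (Or.inl ⟨c, d, rfl⟩))
lemma isFUIP_Ioi (c : ℝ) : IsFUIP (Set.Ioi c) := .of_interval (Or.inr (Or.inr (Or.inl ⟨c, rfl⟩)))
lemma isFUIP_Iio (c : ℝ) : IsFUIP (Set.Iio c) := .of_interval (Or.inr (Or.inr (Or.inr (Or.inl ⟨c, rfl⟩))))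
lemma isFUIP_univ : IsFUIP (Set.univ : Set ℝ) := .of_interval (by unfold IsIntervalOrPt; tauto)
lemma isFUIP_empty : IsFUIP (∅ : Set ℝ) := .of_interval (by unfold IsIntervalOrPt; tauto)

lemma IsFUIP.union {A B : Set ℝ} (hA : IsFUIP A) (hB : IsFUIP B) : IsFUIP (A ∪ B) := by
  classical
  obtain ⟨T, hT, rfl⟩ := hA
  obtain ⟨U, hU, rfl⟩ := hB
  refine ⟨T ∪ U, ?_, ?_⟩
  · intro I hI
    rcases Finset.mem_union.1 hI with h | h
    · exact hT I h
    · exact hU I h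
  · simp [Set.sUnion_union]

lemma isFUIP_Ici (c : ℝ) : IsFUIP (Set.Ici c) := by
  have h := (isFUIP_singleton c).union (isFUIP_Ioi c)
  have : ({c} : Set ℝ) ∪ Set.Ioi c = Set.Ici c := by
    ext x
    simp only [Set.mem_union, Set.mem_singleton_iff, Set.mem_Ioi, Set.mem_Ici]
    constructor
    · rintro (rfl | h) <;> [exact le_refl x; exact le_of_lt h]
    · intro h
      rcases eq_or_lt_of_le h with h | h
      · exact Or.inl h.symm
      · exact Or.inr h
  rwa [this] at h

/-- membership atom, from o-minimality -/
lemma defPred_mem (hS : S.IsOMinimal) {A : Set ℝ} (hA : IsFUIP A) {n} (i : Fin n) :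
    S.DefPred n (fun x => x i ∈ A) := by
  have h1 : S.DefPred 1 (fun z => z 0 ∈ A) := (hS A).2 hA
  exact h1.reindex (fun _ => i)

lemma defPred_eqIdx {n} (i j : Fin n) : S.DefPred n (fun x => x i = x j) := S.diag_mem n i j

lemma defPred_addIdx {n} (i j k : Fin n) : S.DefPred n (fun x => x i + x j = x k) :=
  DefPred.reindex ![i,j,k] S.add_mem

lemma defPred_mulIdx {n} (i j k : Fin n) : S.DefPred n (fun x => x i * x j = x k) :=
  DefPred.reindex ![i,j,k] S.mul_mem

lemma defPred_ltIdx (hS : S.IsOMinimal) {n} (i j : Fin n) :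
    S.DefPred n (fun x => x i < x j) := by
  have h1 : S.DefPred (n+1) (fun z => z (Fin.last n) ∈ Set.Ioi (0:ℝ)) :=
    defPred_mem hS (isFUIP_Ioi 0) (Fin.last n)
  have h2 : S.DefPred (n+1) (fun z => z i.castSucc + z (Fin.last n) = z j.castSucc) :=
    defPred_addIdx _ _ _
  have h3 := (h1.and h2).exLast
  refine h3.congr (fun x => ?_)
  simp only [Fin.snoc_last, Fin.snoc_castSucc]
  constructor
  · rintro ⟨t, ht, hadd⟩
    have : (0:ℝ) < t := ht
    linarith
  · intro h
    exact ⟨x j - x i, by simp [Set.mem_Ioi]; linarith, by ring⟩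

lemma defPred_leIdx (hS : S.IsOMinimal) {n} (i j : Fin n) :
    S.DefPred n (fun x => x i ≤ x j) :=
  ((defPred_ltIdx hS j i).not).congr (fun x => not_lt)


section Formulas
variable {S : RealStructure} {Dset : Set ℝ} {f : ℝ → ℝ}

lemma defPred_rightClass (hS : S.IsOMinimal)
    (hgraph : S.DefPred 2 (fun z => z 0 ∈ Dset ∧ f (z 0) = z 1)) (hD : IsFUIP Dset)
    {r : ℝ → ℝ → Prop} (hr : S.DefPred 2 (fun z => r (z 0) (z 1))) :
    S.DefPred 1 (fun x => x 0 ∈ Dset ∧ ∃ w, x 0 < w ∧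
      ∀ y, (y ∈ Dset ∧ x 0 < y ∧ y < w) → r (f (x 0)) (f y)) := by
  -- vars : 0:x 1:w 2:y 3:u=f y 4:v=f x
  have Q5 : S.DefPred 5 (fun z => (z 2 ∈ Dset ∧ f (z 2) = z 3) ∧
      (z 0 ∈ Dset ∧ f (z 0) = z 4) ∧ r (z 4) (z 3)) :=
    (hgraph.reindex ![2,3]).and ((hgraph.reindex ![0,4]).and (hr.reindex ![4,3]))
  have Q3 := Q5.exLast.exLast
  have C3 : S.DefPred 3 (fun z => z 2 ∈ Dset ∧ z 0 < z 2 ∧ z 2 < z 1) :=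
    (defPred_mem hS hD 2).and ((defPred_ltIdx hS 0 2).and (defPred_ltIdx hS 2 1))
  have P2 := (C3.imp Q3).allLast
  have P1 := (defPred_mem hS hD (0 : Fin 1)).and
    (((defPred_ltIdx hS (0 : Fin 2) 1).and P2).exLast)
  refine P1.congr (fun x => ?_)
  norm_num [Fin.snoc, Fin.castLT]
  intro hxD
  constructor
  · rintro ⟨w, hw, hall⟩
    refine ⟨w, hw, ?_⟩
    rintro y hyD hxy hyw
    obtain ⟨u, ⟨_, hfy⟩, v, ⟨_, hfx⟩, hruv⟩ := hall y hyD hxy hyw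
    rw [← hfy, ← hfx] at hruv
    exact hruv
  · rintro ⟨w, hw, hall⟩
    refine ⟨w, hw, ?_⟩
    rintro y hyD hxy hyw
    exact ⟨f y, ⟨hyD, rfl⟩, f (x 0), ⟨hxD, rfl⟩, hall y hyD hxy hyw⟩

lemma defPred_leftClass (hS : S.IsOMinimal)
    (hgraph : S.DefPred 2 (fun z => z 0 ∈ Dset ∧ f (z 0) = z 1)) (hD : IsFUIP Dset)
    {r : ℝ → ℝ → Prop} (hr : S.DefPred 2 (fun z => r (z 0) (z 1))) :
    S.DefPred 1 (fun x => x 0 ∈ Dset ∧ ∃ w, w < x 0 ∧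
      ∀ y, (y ∈ Dset ∧ w < y ∧ y < x 0) → r (f (x 0)) (f y)) := by
  have Q5 : S.DefPred 5 (fun z => (z 2 ∈ Dset ∧ f (z 2) = z 3) ∧
      (z 0 ∈ Dset ∧ f (z 0) = z 4) ∧ r (z 4) (z 3)) :=
    (hgraph.reindex ![2,3]).and ((hgraph.reindex ![0,4]).and (hr.reindex ![4,3]))
  have Q3 := Q5.exLast.exLast
  have C3 : S.DefPred 3 (fun z => z 2 ∈ Dset ∧ z 1 < z 2 ∧ z 2 < z 0) :=
    (defPred_mem hS hD 2).and ((defPred_ltIdx hS 1 2).and (defPred_ltIdx hS 2 0))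
  have P2 := (C3.imp Q3).allLast
  have P1 := (defPred_mem hS hD (0 : Fin 1)).and
    (((defPred_ltIdx hS (1 : Fin 2) 0).and P2).exLast)
  refine P1.congr (fun x => ?_)
  norm_num [Fin.snoc, Fin.castLT]
  intro hxD
  constructor
  · rintro ⟨w, hw, hall⟩
    refine ⟨w, hw, ?_⟩
    rintro y hyD hxy hyw
    obtain ⟨u, ⟨_, hfy⟩, v, ⟨_, hfx⟩, hruv⟩ := hall y hyD hxy hyw
    rw [← hfy, ← hfx] at hruv
    exact hruv
  · rintro ⟨w, hw, hall⟩
    refine ⟨w, hw, ?_⟩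
    rintro y hyD hxy hyw
    exact ⟨f y, ⟨hyD, rfl⟩, f (x 0), ⟨hxD, rfl⟩, hall y hyD hxy hyw⟩

/-- the fiber set at a fixed point -/
lemma defPred_fiber (hS : S.IsOMinimal)
    (hgraph : S.DefPred 2 (fun z => z 0 ∈ Dset ∧ f (z 0) = z 1))
    (c : ℝ) {B : Set ℝ} (hB : IsFUIP B) :
    S.DefPred 1 (fun y => y 0 ∈ Dset ∧ y 0 ∈ Set.Ioi c ∧ f (y 0) ∈ B) := by
  have Q2 : S.DefPred 2 (fun z => (z 0 ∈ Dset ∧ f (z 0) = z 1) ∧ z 1 ∈ B) :=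
    hgraph.and (defPred_mem hS hB 1)
  have P1 := (defPred_mem hS (isFUIP_Ioi c) (0 : Fin 1)).and Q2.exLast
  refine P1.congr (fun y => ?_)
  norm_num [Fin.snoc, Fin.castLT]
  constructor
  · rintro ⟨hc, u, ⟨hyD, hfy⟩, hu⟩
    exact ⟨hyD, hc, by rwa [hfy]⟩
  · rintro ⟨hyD, hc, hB'⟩
    exact ⟨hc, f (y 0), ⟨hyD, rfl⟩, hB'⟩

lemma defPred_fiber_left (hS : S.IsOMinimal)
    (hgraph : S.DefPred 2 (fun z => z 0 ∈ Dset ∧ f (z 0) = z 1))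
    (c : ℝ) {B : Set ℝ} (hB : IsFUIP B) :
    S.DefPred 1 (fun y => y 0 ∈ Dset ∧ y 0 ∈ Set.Iio c ∧ f (y 0) ∈ B) := by
  have Q2 : S.DefPred 2 (fun z => (z 0 ∈ Dset ∧ f (z 0) = z 1) ∧ z 1 ∈ B) :=
    hgraph.and (defPred_mem hS hB 1)
  have P1 := (defPred_mem hS (isFUIP_Iio c) (0 : Fin 1)).and Q2.exLast
  refine P1.congr (fun y => ?_)
  norm_num [Fin.snoc, Fin.castLT]
  constructor
  · rintro ⟨hc, u, ⟨hyD, hfy⟩, hu⟩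
    exact ⟨hyD, hc, by rwa [hfy]⟩
  · rintro ⟨hyD, hc, hB'⟩
    exact ⟨hc, f (y 0), ⟨hyD, rfl⟩, hB'⟩

/-- first-order differentiability formula -/
def PhiDiff (Dset : Set ℝ) (f : ℝ → ℝ) (x : ℝ) : Prop :=
  ∃ L, ∀ e : ℝ, 0 < e → ∃ w1 w2, ((w1 < x ∧ x < w2) ∧
    ∀ y, (y ∈ Dset ∧ w1 < y ∧ y < w2) →
      (y ∈ Dset ∧ x ∈ Dset ∧ |f y - (f x + L * (y - x))| ≤ e * |y - x|))

set_option maxHeartbeats 1000000 in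
lemma defPred_phiDiff (hS : S.IsOMinimal)
    (hgraph : S.DefPred 2 (fun z => z 0 ∈ Dset ∧ f (z 0) = z 1)) (hD : IsFUIP Dset) :
    S.DefPred 1 (fun x => PhiDiff Dset f (x 0)) := by
  -- vars: 0:x 1:L 2:e 3:w1 4:w2 5:y 6:u 7:v 8:d 9:m 10:q 11:s 12:r 13:g 14:t 15:c
  have A1 : S.DefPred 16 (fun x => x 5 ∈ Dset ∧ f (x 5) = x 6) := hgraph.reindex ![5,6]
  have A2 : S.DefPred 16 (fun x => x 0 ∈ Dset ∧ f (x 0) = x 7) := hgraph.reindex ![0,7]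
  have A3 := defPred_addIdx (S := S) (n := 16) 0 8 5
  have A4 := defPred_mulIdx (S := S) (n := 16) 1 8 9
  have A5 := defPred_mem hS (isFUIP_Ici 0) (10 : Fin 16)
  have A6 := (defPred_eqIdx (S := S) (n := 16) 10 8).or
    ((defPred_addIdx (S := S) (n := 16) 8 10 11).and
      (defPred_mem hS (isFUIP_singleton 0) (11 : Fin 16)))
  have A7 := defPred_mulIdx (S := S) (n := 16) 2 10 12
  have A8 := defPred_addIdx (S := S) (n := 16) 7 9 13
  have A9 := defPred_addIdx (S := S) (n := 16) 13 14 6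
  have A10 := defPred_leIdx hS (14 : Fin 16) 12
  have A11 := (defPred_addIdx (S := S) (n := 16) 14 12 15).and
    (defPred_mem hS (isFUIP_Ici 0) (15 : Fin 16))
  have Big := A1.and (A2.and (A3.and (A4.and (A5.and (A6.and (A7.and (A8.and
    (A9.and (A10.and A11)))))))))
  have Err6 := Big.exLast.exLast.exLast.exLast.exLast.exLast.exLast.exLast.exLast.exLast
  have Err6c : S.DefPred 6 (fun z => ∃ u v d m q s r g t c,
      (z 5 ∈ Dset ∧ f (z 5) = u) ∧
      (z 0 ∈ Dset ∧ f (z 0) = v) ∧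
      (z 0 + d = z 5) ∧ (z 1 * d = m) ∧ (q ∈ Set.Ici (0:ℝ)) ∧
      (q = d ∨ (d + q = s ∧ s ∈ ({0} : Set ℝ))) ∧
      (z 2 * q = r) ∧ (v + m = g) ∧ (g + t = u) ∧ (t ≤ r) ∧
      (t + r = c ∧ c ∈ Set.Ici (0:ℝ))) := Err6
  have Err6' : S.DefPred 6 (fun z => z 5 ∈ Dset ∧ z 0 ∈ Dset ∧
      |f (z 5) - (f (z 0) + z 1 * (z 5 - z 0))| ≤ z 2 * |z 5 - z 0|) := by
    refine Err6c.congr (fun z => ?_)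
    constructor
    · rintro ⟨u, v, d, m, q, s, r, g, t, c, ⟨hyD, hfy⟩, ⟨hxD, hfx⟩, hadd, hmul, hq0,
        hqd, hr, hg, hu, htr, htc, hc0⟩
      refine ⟨hyD, hxD, ?_⟩
      have hq0' : (0:ℝ) ≤ q := hq0
      have hc0' : (0:ℝ) ≤ c := hc0
      have hd : d = z 5 - z 0 := by linarith
      subst hd
      have hq : q = |z 5 - z 0| := by
        rcases hqd with h | ⟨h1, h2⟩
        · rw [h, abs_of_nonneg]; rwa [← h]
        · have h2' : s = 0 := h2
          rw [h2'] at h1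
          have hq' : q = -(z 5 - z 0) := by linarith
          rw [hq', abs_of_nonpos]; linarith
      have key : f (z 5) - (f (z 0) + z 1 * (z 5 - z 0)) = t := by
        rw [hfy, hfx, hmul, hg, ← hu]; ring
      rw [key, ← hq, hr]
      exact abs_le.2 ⟨by linarith, htr⟩
    · rintro ⟨hyD, hxD, hineq⟩
      refine ⟨f (z 5), f (z 0), z 5 - z 0, z 1 * (z 5 - z 0), |z 5 - z 0|,
        (z 5 - z 0) + |z 5 - z 0|, z 2 * |z 5 - z 0|,
        f (z 0) + z 1 * (z 5 - z 0),
        f (z 5) - (f (z 0) + z 1 * (z 5 - z 0)),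
        (f (z 5) - (f (z 0) + z 1 * (z 5 - z 0))) + z 2 * |z 5 - z 0|,
        ⟨hyD, rfl⟩, ⟨hxD, rfl⟩, by ring, rfl, Set.mem_Ici.2 (abs_nonneg _), ?_, rfl, rfl, by ring,
        (abs_le.1 hineq).2, rfl, ?_⟩
      · rcases le_or_gt 0 (z 5 - z 0) with h | h
        · exact Or.inl (abs_of_nonneg h)
        · refine Or.inr ⟨rfl, ?_⟩
          show (z 5 - z 0) + |z 5 - z 0| = 0
          rw [abs_of_neg h]; ring
      · show (0:ℝ) ≤ _
        have := (abs_le.1 hineq).1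
        linarith
  have C6 : S.DefPred 6 (fun z => z 5 ∈ Dset ∧ z 3 < z 5 ∧ z 5 < z 4) :=
    (defPred_mem hS hD (5 : Fin 6)).and ((defPred_ltIdx hS 3 5).and (defPred_ltIdx hS 5 4))
  have P5 := (C6.imp Err6').allLast
  have P5' := ((defPred_ltIdx hS (3 : Fin 5) 0).and (defPred_ltIdx hS (0 : Fin 5) 4)).and P5
  have P3 := P5'.exLast.exLast
  have P3' := (defPred_mem hS (isFUIP_Ioi 0) (2 : Fin 3)).imp P3
  have P1 := P3'.allLast.exLast
  have P1c : S.DefPred 1 (fun x => ∃ L, ∀ e : ℝ, 0 < e → ∃ w1 w2, ((w1 < x 0 ∧ x 0 < w2) ∧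
      ∀ y, (y ∈ Dset ∧ w1 < y ∧ y < w2) →
        (y ∈ Dset ∧ x 0 ∈ Dset ∧ |f y - (f (x 0) + L * (y - x 0))| ≤ e * |y - x 0|))) := P1
  exact P1c

end Formulas
end RealStructure

namespace RealStructure
open Set

lemma intervalOrPt_right_germ {A : Set ℝ} (h : IsIntervalOrPt A) (x : ℝ) :
    (∃ ε > 0, Set.Ioo x (x + ε) ⊆ A) ∨ (∃ ε > 0, Set.Ioo x (x + ε) ∩ A = ∅) := by
  rcases h with ⟨a, rfl⟩ | ⟨a, b, rfl⟩ | ⟨a, rfl⟩ | ⟨a, rfl⟩ | rfl | rfl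
  · rcases le_or_gt a x with h | h
    · refine Or.inr ⟨1, one_pos, Set.eq_empty_iff_forall_notMem.2 ?_⟩
      rintro z ⟨hz, hzA⟩
      rw [Set.mem_singleton_iff] at hzA
      subst hzA; linarith [hz.1]
    · refine Or.inr ⟨a - x, by linarith, Set.eq_empty_iff_forall_notMem.2 ?_⟩
      rintro z ⟨hz, hzA⟩
      rw [Set.mem_singleton_iff] at hzA
      subst hzA; linarith [hz.2]
  · rcases le_or_gt a x with h1 | h1
    · rcases lt_or_ge x b with h2 | h2
      · exact Or.inl ⟨b - x, by linarith, fun z hz => ⟨by linarith [hz.1], by linarith [hz.2]⟩⟩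
      · refine Or.inr ⟨1, one_pos, Set.eq_empty_iff_forall_notMem.2 ?_⟩
        rintro z ⟨hz, hzA⟩
        linarith [hz.1, hzA.2]
    · refine Or.inr ⟨a - x, by linarith, Set.eq_empty_iff_forall_notMem.2 ?_⟩
      rintro z ⟨hz, hzA⟩
      linarith [hz.2, hzA.1]
  · rcases le_or_gt a x with h | h
    · exact Or.inl ⟨1, one_pos, fun z hz => by simp only [Set.mem_Ioi]; linarith [hz.1]⟩
    · refine Or.inr ⟨a - x, by linarith, Set.eq_empty_iff_forall_notMem.2 ?_⟩
      rintro z ⟨hz, hzA⟩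
      have := Set.mem_Ioi.1 hzA
      linarith [hz.2]
  · rcases lt_or_ge x a with h | h
    · exact Or.inl ⟨a - x, by linarith, fun z hz => by simp only [Set.mem_Iio]; linarith [hz.2]⟩
    · refine Or.inr ⟨1, one_pos, Set.eq_empty_iff_forall_notMem.2 ?_⟩
      rintro z ⟨hz, hzA⟩
      have := Set.mem_Iio.1 hzA
      linarith [hz.1]
  · exact Or.inl ⟨1, one_pos, fun z _ => Set.mem_univ z⟩
  · exact Or.inr ⟨1, one_pos, by simp⟩

lemma intervalOrPt_left_germ {A : Set ℝ} (h : IsIntervalOrPt A) (x : ℝ) :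
    (∃ ε > 0, Set.Ioo (x - ε) x ⊆ A) ∨ (∃ ε > 0, Set.Ioo (x - ε) x ∩ A = ∅) := by
  rcases h with ⟨a, rfl⟩ | ⟨a, b, rfl⟩ | ⟨a, rfl⟩ | ⟨a, rfl⟩ | rfl | rfl
  · rcases lt_or_ge a x with h | h
    · refine Or.inr ⟨x - a, by linarith, Set.eq_empty_iff_forall_notMem.2 ?_⟩
      rintro z ⟨hz, hzA⟩
      rw [Set.mem_singleton_iff] at hzA
      subst hzA; linarith [hz.1]
    · refine Or.inr ⟨1, one_pos, Set.eq_empty_iff_forall_notMem.2 ?_⟩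
      rintro z ⟨hz, hzA⟩
      rw [Set.mem_singleton_iff] at hzA
      subst hzA; linarith [hz.2]
  · rcases lt_or_ge a x with h1 | h1
    · rcases le_or_gt x b with h2 | h2
      · exact Or.inl ⟨x - a, by linarith, fun z hz => ⟨by linarith [hz.1], by linarith [hz.2]⟩⟩
      · refine Or.inr ⟨x - b, by linarith, Set.eq_empty_iff_forall_notMem.2 ?_⟩
        rintro z ⟨hz, hzA⟩
        linarith [hz.1, hzA.2]
    · refine Or.inr ⟨1, one_pos, Set.eq_empty_iff_forall_notMem.2 ?_⟩
      rintro z ⟨hz, hzA⟩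
      linarith [hz.2, hzA.1]
  · rcases lt_or_ge a x with h | h
    · exact Or.inl ⟨x - a, by linarith, fun z hz => by simp only [Set.mem_Ioi]; linarith [hz.1]⟩
    · refine Or.inr ⟨1, one_pos, Set.eq_empty_iff_forall_notMem.2 ?_⟩
      rintro z ⟨hz, hzA⟩
      have := Set.mem_Ioi.1 hzA
      linarith [hz.2]
  · rcases le_or_gt x a with h | h
    · exact Or.inl ⟨1, one_pos, fun z hz => by simp only [Set.mem_Iio]; linarith [hz.2]⟩
    · refine Or.inr ⟨x - a, by linarith, Set.eq_empty_iff_forall_notMem.2 ?_⟩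
      rintro z ⟨hz, hzA⟩
      have := Set.mem_Iio.1 hzA
      linarith [hz.1]
  · exact Or.inl ⟨1, one_pos, fun z _ => Set.mem_univ z⟩
  · exact Or.inr ⟨1, one_pos, by simp⟩

lemma IsFUIP.right_germ {A : Set ℝ} (h : IsFUIP A) (x : ℝ) :
    (∃ ε > 0, Set.Ioo x (x + ε) ⊆ A) ∨ (∃ ε > 0, Set.Ioo x (x + ε) ∩ A = ∅) := by
  obtain ⟨T, hT, rfl⟩ := h
  classical
  induction T using Finset.induction with
  | empty => exact Or.inr ⟨1, one_pos, by simp⟩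
  | insert I T' hni ih =>
      rw [Finset.coe_insert, Set.sUnion_insert]
      rcases intervalOrPt_right_germ (hT I (Finset.mem_insert_self I T')) x with
        ⟨ε, hε, hsub⟩ | ⟨ε, hε, hemp⟩
      · exact Or.inl ⟨ε, hε, fun z hz => Or.inl (hsub hz)⟩
      · rcases ih (fun J hJ => hT J (Finset.mem_insert_of_mem hJ)) with
          ⟨ε', hε', hsub'⟩ | ⟨ε', hε', hemp'⟩
        · exact Or.inl ⟨ε', hε', fun z hz => Or.inr (hsub' hz)⟩
        · refine Or.inr ⟨min ε ε', lt_min hε hε', Set.eq_empty_iff_forall_notMem.2 ?_⟩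
          rintro z ⟨hz, (hI | hT')⟩
          · have : z ∈ Set.Ioo x (x + ε) ∩ I :=
              ⟨⟨hz.1, lt_of_lt_of_le hz.2 (by linarith [min_le_left ε ε'])⟩, hI⟩
            rw [hemp] at this; exact this
          · have : z ∈ Set.Ioo x (x + ε') ∩ ⋃₀ (T' : Set (Set ℝ)) :=
              ⟨⟨hz.1, lt_of_lt_of_le hz.2 (by linarith [min_le_right ε ε'])⟩, hT'⟩
            rw [hemp'] at this; exact this

lemma IsFUIP.left_germ {A : Set ℝ} (h : IsFUIP A) (x : ℝ) :
    (∃ ε > 0, Set.Ioo (x - ε) x ⊆ A) ∨ (∃ ε > 0, Set.Ioo (x - ε) x ∩ A = ∅) := by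
  obtain ⟨T, hT, rfl⟩ := h
  classical
  induction T using Finset.induction with
  | empty => exact Or.inr ⟨1, one_pos, by simp⟩
  | insert I T' hni ih =>
      rw [Finset.coe_insert, Set.sUnion_insert]
      rcases intervalOrPt_left_germ (hT I (Finset.mem_insert_self I T')) x with
        ⟨ε, hε, hsub⟩ | ⟨ε, hε, hemp⟩
      · exact Or.inl ⟨ε, hε, fun z hz => Or.inl (hsub hz)⟩
      · rcases ih (fun J hJ => hT J (Finset.mem_insert_of_mem hJ)) with
          ⟨ε', hε', hsub'⟩ | ⟨ε', hε', hemp'⟩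
        · exact Or.inl ⟨ε', hε', fun z hz => Or.inr (hsub' hz)⟩
        · refine Or.inr ⟨min ε ε', lt_min hε hε', Set.eq_empty_iff_forall_notMem.2 ?_⟩
          rintro z ⟨hz, (hI | hT')⟩
          · have : z ∈ Set.Ioo (x - ε) x ∩ I :=
              ⟨⟨lt_of_le_of_lt (by linarith [min_le_left ε ε']) hz.1, hz.2⟩, hI⟩
            rw [hemp] at this; exact this
          · have : z ∈ Set.Ioo (x - ε') x ∩ ⋃₀ (T' : Set (Set ℝ)) :=
              ⟨⟨lt_of_le_of_lt (by linarith [min_le_right ε ε']) hz.1, hz.2⟩, hT'⟩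
            rw [hemp'] at this; exact this

lemma intervalOrPt_finite_or_interval {A : Set ℝ} (h : IsIntervalOrPt A) :
    A.Finite ∨ ∃ c d, c < d ∧ Set.Ioo c d ⊆ A := by
  rcases h with ⟨a, rfl⟩ | ⟨a, b, rfl⟩ | ⟨a, rfl⟩ | ⟨a, rfl⟩ | rfl | rfl
  · exact Or.inl (Set.finite_singleton a)
  · rcases lt_or_ge a b with h | h
    · exact Or.inr ⟨a, b, h, subset_rfl⟩
    · exact Or.inl (by rw [Set.Ioo_eq_empty (not_lt.2 h)]; exact Set.finite_empty)
  · exact Or.inr ⟨a, a + 1, by linarith, fun z hz => by simp only [Set.mem_Ioi]; exact hz.1⟩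
  · exact Or.inr ⟨a - 1, a, by linarith, fun z hz => by simp only [Set.mem_Iio]; exact hz.2⟩
  · exact Or.inr ⟨0, 1, one_pos, fun z _ => Set.mem_univ z⟩
  · exact Or.inl Set.finite_empty

lemma IsFUIP.finite_or_interval {A : Set ℝ} (h : IsFUIP A) :
    A.Finite ∨ ∃ c d, c < d ∧ Set.Ioo c d ⊆ A := by
  obtain ⟨T, hT, rfl⟩ := h
  by_cases hfin : ∀ I ∈ T, (I : Set ℝ).Finite
  · exact Or.inl (Set.Finite.sUnion (T.finite_toSet) hfin)
  · push_neg at hfin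
    obtain ⟨I, hI, hIinf⟩ := hfin
    rcases intervalOrPt_finite_or_interval (hT I hI) with h | ⟨c, d, hcd, hsub⟩
    · exact absurd h hIinf
    · exact Or.inr ⟨c, d, hcd, fun z hz => ⟨I, hI, hsub hz⟩⟩

end RealStructure

namespace RealStructure
open Set

lemma phiDiff_iff {Dset : Set ℝ} {f : ℝ → ℝ} (hD : IsOpen Dset) {x : ℝ} (hx : x ∈ Dset) :
    PhiDiff Dset f x ↔ DifferentiableAt ℝ f x := by
  constructor
  · rintro ⟨L, hL⟩
    have : HasDerivAt f L x := by
      rw [hasDerivAt_iff_isLittleO, Asymptotics.isLittleO_iff]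
      intro c hc
      obtain ⟨w1, w2, ⟨h1, h2⟩, hall⟩ := hL c hc
      have hU : Set.Ioo w1 w2 ∩ Dset ∈ nhds x :=
        (isOpen_Ioo.inter hD).mem_nhds ⟨⟨h1, h2⟩, hx⟩
      filter_upwards [hU] with y hy
      obtain ⟨⟨hy1, hy2⟩, hyD⟩ := hy
      have hb := (hall y ⟨hyD, hy1, hy2⟩).2.2
      have : f y - f x - (y - x) * L = f y - (f x + L * (y - x)) := by ring
      rw [Real.norm_eq_abs, Real.norm_eq_abs, smul_eq_mul, this]
      exact hb
    exact this.differentiableAt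
  · intro h
    have hL : HasDerivAt f (deriv f x) x := h.hasDerivAt
    refine ⟨deriv f x, ?_⟩
    intro e he
    have := hasDerivAt_iff_isLittleO.1 hL
    rw [Asymptotics.isLittleO_iff] at this
    have hev := this he
    rw [Metric.eventually_nhds_iff] at hev
    obtain ⟨δ, hδ, hball⟩ := hev
    refine ⟨x - δ, x + δ, ⟨by linarith, by linarith⟩, ?_⟩
    rintro y ⟨hyD, hy1, hy2⟩
    refine ⟨hyD, hx, ?_⟩
    have hdist : dist y x < δ := by
      rw [Real.dist_eq, abs_lt]; constructor <;> linarith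
    have hb := hball hdist
    rw [Real.norm_eq_abs, Real.norm_eq_abs, smul_eq_mul] at hb
    have : f y - (f x + deriv f x * (y - x)) = f y - f x - (y - x) * deriv f x := by ring
    rw [this]
    exact hb

section AnalysisCore
variable {Dset : Set ℝ} {f : ℝ → ℝ} {p q : ℝ}

/-- increasing-through classes on an interval give strict monotonicity -/
lemma strictMonoOn_of_classes (hpq : p < q) (hsub : Set.Ioo p q ⊆ Dset)
    (hR : ∀ x ∈ Set.Ioo p q, ∃ w, x < w ∧ ∀ y, (y ∈ Dset ∧ x < y ∧ y < w) → f x < f y)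
    (hL : ∀ x ∈ Set.Ioo p q, ∃ w, w < x ∧ ∀ y, (y ∈ Dset ∧ w < y ∧ y < x) → f y < f x) :
    StrictMonoOn f (Set.Ioo p q) := by
  intro x hx y hy hxy
  set T : Set ℝ := {t | t ≤ y ∧ ∀ z, x < z → z < t → f x < f z} with hT
  have hxT : x ∈ T := ⟨le_of_lt hxy, fun z h1 h2 => absurd h2 (not_lt.2 (le_of_lt h1))⟩
  have hne : T.Nonempty := ⟨x, hxT⟩
  have hbdd : BddAbove T := ⟨y, fun t ht => ht.1⟩
  set c := sSup T with hc
  have hcy : c ≤ y := csSup_le hne (fun t ht => ht.1)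
  have key : ∀ z, x < z → z < c → f x < f z := by
    intro z h1 h2
    obtain ⟨t, htT, hzt⟩ := exists_lt_of_lt_csSup hne h2
    exact htT.2 z h1 hzt
  have hxc : x < c := by
    obtain ⟨w, hw, hwall⟩ := hR x hx
    have ht0 : min w y ∈ T := by
      refine ⟨min_le_right _ _, fun z h1 h2 => ?_⟩
      have hzw : z < w := lt_of_lt_of_le h2 (min_le_left _ _)
      have hzy : z < y := lt_of_lt_of_le h2 (min_le_right _ _)
      have hzI : z ∈ Set.Ioo p q := ⟨lt_trans hx.1 h1, lt_trans hzy hy.2⟩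
      exact hwall z ⟨hsub hzI, h1, hzw⟩
    have := le_csSup hbdd ht0
    have hmin : x < min w y := lt_min hw hxy
    linarith
  have hcq : c < q := lt_of_le_of_lt hcy hy.2
  have hcI : c ∈ Set.Ioo p q := ⟨lt_trans hx.1 hxc, hcq⟩
  have hfxc : f x < f c := by
    obtain ⟨w', hw', hw'all⟩ := hL c hcI
    obtain ⟨z, hz1, hz2⟩ := exists_between (show max x w' < c from max_lt hxc hw')
    have hzx : x < z := lt_of_le_of_lt (le_max_left _ _) hz1
    have hzw' : w' < z := lt_of_le_of_lt (le_max_right _ _) hz1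
    have hzI : z ∈ Set.Ioo p q := ⟨lt_trans hx.1 hzx, lt_trans hz2 hcq⟩
    have h1 := key z hzx hz2
    have h2 := hw'all z ⟨hsub hzI, hzw', hz2⟩
    linarith
  have hceq : c = y := by
    by_contra hne'
    have hclty : c < y := lt_of_le_of_ne hcy hne'
    obtain ⟨w, hw, hwall⟩ := hR c hcI
    have ht1 : min w y ∈ T := by
      refine ⟨min_le_right _ _, fun z h1 h2 => ?_⟩
      rcases lt_trichotomy z c with h | h | h
      · exact key z h1 h
      · rw [h]; exact hfxc
      · have hzw : z < w := lt_of_lt_of_le h2 (min_le_left _ _)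
        have hzy : z < y := lt_of_lt_of_le h2 (min_le_right _ _)
        have hzI : z ∈ Set.Ioo p q := ⟨lt_trans hcI.1 h, lt_trans hzy hy.2⟩
        have := hwall z ⟨hsub hzI, h, hzw⟩
        linarith
    have := le_csSup hbdd ht1
    have : min w y ≤ c := this
    have hminc : c < min w y := lt_min hw hclty
    linarith
  -- conclude
  obtain ⟨w', hw', hw'all⟩ := hL y hy
  obtain ⟨z, hz1, hz2⟩ := exists_between (show max x w' < y from max_lt hxy hw')
  have hzx : x < z := lt_of_le_of_lt (le_max_left _ _) hz1
  have hzw' : w' < z := lt_of_le_of_lt (le_max_right _ _) hz1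
  have hzI : z ∈ Set.Ioo p q := ⟨lt_trans hx.1 hzx, lt_trans hz2 hy.2⟩
  have h1 : f x < f z := by
    rcases lt_trichotomy z c with h | h | h
    · exact key z hzx h
    · rw [h]; exact hfxc
    · rw [hceq] at h; linarith
  have h2 := hw'all z ⟨hsub hzI, hzw', hz2⟩
  linarith

/-- locally-constant-through classes on an interval give constancy -/
lemma constOn_of_classes (hpq : p < q) (hsub : Set.Ioo p q ⊆ Dset)
    (hR : ∀ x ∈ Set.Ioo p q, ∃ w, x < w ∧ ∀ y, (y ∈ Dset ∧ x < y ∧ y < w) → f x = f y)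
    (hL : ∀ x ∈ Set.Ioo p q, ∃ w, w < x ∧ ∀ y, (y ∈ Dset ∧ w < y ∧ y < x) → f x = f y) :
    ∀ x ∈ Set.Ioo p q, ∀ y ∈ Set.Ioo p q, f x = f y := by
  -- prove for x < y, then conclude
  have main : ∀ x ∈ Set.Ioo p q, ∀ y ∈ Set.Ioo p q, x < y → f x = f y := by
    intro x hx y hy hxy
    set T : Set ℝ := {t | t ≤ y ∧ ∀ z, x < z → z < t → f z = f x} with hT
    have hxT : x ∈ T := ⟨le_of_lt hxy, fun z h1 h2 => absurd h2 (not_lt.2 (le_of_lt h1))⟩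
    have hne : T.Nonempty := ⟨x, hxT⟩
    have hbdd : BddAbove T := ⟨y, fun t ht => ht.1⟩
    set c := sSup T with hc
    have hcy : c ≤ y := csSup_le hne (fun t ht => ht.1)
    have key : ∀ z, x < z → z < c → f z = f x := by
      intro z h1 h2
      obtain ⟨t, htT, hzt⟩ := exists_lt_of_lt_csSup hne h2
      exact htT.2 z h1 hzt
    have hxc : x < c := by
      obtain ⟨w, hw, hwall⟩ := hR x hx
      have ht0 : min w y ∈ T := by
        refine ⟨min_le_right _ _, fun z h1 h2 => ?_⟩
        have hzw : z < w := lt_of_lt_of_le h2 (min_le_left _ _)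
        have hzy : z < y := lt_of_lt_of_le h2 (min_le_right _ _)
        have hzI : z ∈ Set.Ioo p q := ⟨lt_trans hx.1 h1, lt_trans hzy hy.2⟩
        exact (hwall z ⟨hsub hzI, h1, hzw⟩).symm
      have := le_csSup hbdd ht0
      have hmin : x < min w y := lt_min hw hxy
      linarith
    have hcq : c < q := lt_of_le_of_lt hcy hy.2
    have hcI : c ∈ Set.Ioo p q := ⟨lt_trans hx.1 hxc, hcq⟩
    have hfxc : f c = f x := by
      obtain ⟨w', hw', hw'all⟩ := hL c hcI
      obtain ⟨z, hz1, hz2⟩ := exists_between (show max x w' < c from max_lt hxc hw')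
      have hzx : x < z := lt_of_le_of_lt (le_max_left _ _) hz1
      have hzw' : w' < z := lt_of_le_of_lt (le_max_right _ _) hz1
      have hzI : z ∈ Set.Ioo p q := ⟨lt_trans hx.1 hzx, lt_trans hz2 hcq⟩
      have h1 := key z hzx hz2
      have h2 := hw'all z ⟨hsub hzI, hzw', hz2⟩
      rw [h2, h1]
    have hceq : c = y := by
      by_contra hne'
      have hclty : c < y := lt_of_le_of_ne hcy hne'
      obtain ⟨w, hw, hwall⟩ := hR c hcI
      have ht1 : min w y ∈ T := by
        refine ⟨min_le_right _ _, fun z h1 h2 => ?_⟩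
        rcases lt_trichotomy z c with h | h | h
        · exact key z h1 h
        · rw [h]; exact hfxc
        · have hzw : z < w := lt_of_lt_of_le h2 (min_le_left _ _)
          have hzy : z < y := lt_of_lt_of_le h2 (min_le_right _ _)
          have hzI : z ∈ Set.Ioo p q := ⟨lt_trans hcI.1 h, lt_trans hzy hy.2⟩
          have := hwall z ⟨hsub hzI, h, hzw⟩
          rw [← this, hfxc]
      have h2 : min w y ≤ c := le_csSup hbdd ht1
      have hminc : c < min w y := lt_min hw hclty
      linarith
    obtain ⟨w', hw', hw'all⟩ := hL y hy
    obtain ⟨z, hz1, hz2⟩ := exists_between (show max x w' < y from max_lt hxy hw')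
    have hzx : x < z := lt_of_le_of_lt (le_max_left _ _) hz1
    have hzw' : w' < z := lt_of_le_of_lt (le_max_right _ _) hz1
    have hzI : z ∈ Set.Ioo p q := ⟨lt_trans hx.1 hzx, lt_trans hz2 hy.2⟩
    have h1 : f z = f x := by
      rcases lt_trichotomy z c with h | h | h
      · exact key z hzx h
      · rw [h]; exact hfxc
      · rw [hceq] at h; linarith
    have h2 := hw'all z ⟨hsub hzI, hzw', hz2⟩
    rw [← h1, h2]
  intro x hx y hy
  rcases lt_trichotomy x y with h | h | h
  · exact main x hx y hy h
  · rw [h]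
  · exact (main y hy x hx h).symm

/-- every point a strict local extremum on an interval is impossible -/
lemma no_strict_local_min (hpq : p < q) (hsub : Set.Ioo p q ⊆ Dset)
    (h : ∀ x ∈ Set.Ioo p q,
      (∃ w, x < w ∧ ∀ y, (y ∈ Dset ∧ x < y ∧ y < w) → f x < f y) ∧
      (∃ w, w < x ∧ ∀ y, (y ∈ Dset ∧ w < y ∧ y < x) → f x < f y)) : False := by
  classical
  -- build injection into ℚ × ℚ
  have hch : ∀ x : Set.Ioo p q, ∃ rs : ℚ × ℚ, (rs.1 : ℝ) < x ∧ (x : ℝ) < rs.2 ∧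
      ∀ z ∈ Set.Ioo p q, (rs.1 : ℝ) < z → z < (rs.2 : ℝ) → z ≠ x → f x < f z := by
    rintro ⟨x, hx⟩
    obtain ⟨⟨w, hw, hwall⟩, ⟨w', hw', hw'all⟩⟩ := h x hx
    obtain ⟨r, hr1, hr2⟩ := exists_rat_btwn (show max p w' < x from max_lt hx.1 hw')
    obtain ⟨s, hs1, hs2⟩ := exists_rat_btwn (show x < min q w from lt_min hx.2 hw)
    refine ⟨(r, s), hr2, hs1, ?_⟩
    intro z hz hrz hzs hzx
    rcases lt_or_gt_of_ne hzx with hlt | hgt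
    · refine hw'all z ⟨hsub hz, ?_, hlt⟩
      calc w' ≤ max p w' := le_max_right _ _
        _ < r := hr1
        _ < z := hrz
    · refine hwall z ⟨hsub hz, hgt, ?_⟩
      calc z < s := hzs
        _ < min q w := hs2
        _ ≤ w := min_le_right _ _
  choose F hF1 hF2 hF3 using hch
  have hinj : Function.Injective F := by
    rintro x1 x2 heq
    by_contra hne
    have hne' : (x1 : ℝ) ≠ (x2 : ℝ) := fun hh => hne (Subtype.ext hh)
    have hr2 : ((F x1).1 : ℝ) < (x2 : ℝ) := by rw [heq]; exact hF1 x2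
    have hs2 : (x2 : ℝ) < ((F x1).2 : ℝ) := by rw [heq]; exact hF2 x2
    have h12 : f x1 < f x2 := hF3 x1 x2 x2.2 hr2 hs2 hne'.symm
    have hr1 : ((F x2).1 : ℝ) < (x1 : ℝ) := by rw [← heq]; exact hF1 x1
    have hs1 : (x1 : ℝ) < ((F x2).2 : ℝ) := by rw [← heq]; exact hF2 x1
    have h21 : f x2 < f x1 := hF3 x2 x1 x1.2 hr1 hs1 hne'
    linarith
  have hcnt : (Set.Ioo p q).Countable := Set.countable_coe_iff.1 hinj.countable
  have hz := hcnt.measure_zero MeasureTheory.volume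
  rw [Real.volume_Ioo] at hz
  exact absurd hz (ne_of_gt (ENNReal.ofReal_pos.2 (by linarith)))

lemma no_strict_local_max (hpq : p < q) (hsub : Set.Ioo p q ⊆ Dset)
    (h : ∀ x ∈ Set.Ioo p q,
      (∃ w, x < w ∧ ∀ y, (y ∈ Dset ∧ x < y ∧ y < w) → f y < f x) ∧
      (∃ w, w < x ∧ ∀ y, (y ∈ Dset ∧ w < y ∧ y < x) → f y < f x)) : False := by
  refine no_strict_local_min (f := fun t => -(f t)) hpq hsub (fun x hx => ?_)
  obtain ⟨⟨w, hw, hwall⟩, ⟨w', hw', hw'all⟩⟩ := h x hx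
  exact ⟨⟨w, hw, fun y hy => by have := hwall y hy; simp only [neg_lt_neg_iff]; linarith⟩,
    ⟨w', hw', fun y hy => by have := hw'all y hy; simp only [neg_lt_neg_iff]; linarith⟩⟩

lemma no_interval_right_eq_left_ne (hpq : p < q) (hsub : Set.Ioo p q ⊆ Dset)
    (hR : ∀ x ∈ Set.Ioo p q, ∃ w, x < w ∧ ∀ y, (y ∈ Dset ∧ x < y ∧ y < w) → f x = f y)
    (hL : ∀ x ∈ Set.Ioo p q, ∃ w, w < x ∧ ∀ y, (y ∈ Dset ∧ w < y ∧ y < x) → f x ≠ f y) :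
    False := by
  set x0 := (p + q) / 2 with hx0
  have hx0I : x0 ∈ Set.Ioo p q := ⟨by simp only [hx0]; linarith, by simp only [hx0]; linarith⟩
  obtain ⟨w, hw, hall⟩ := hR x0 hx0I
  obtain ⟨y0, hy01, hy02⟩ := exists_between (show x0 < min w q from lt_min hw hx0I.2)
  have hy0w : y0 < w := lt_of_lt_of_le hy02 (min_le_left _ _)
  have hy0I : y0 ∈ Set.Ioo p q :=
    ⟨lt_trans hx0I.1 hy01, lt_of_lt_of_le hy02 (min_le_right _ _)⟩
  have hfy0 : f x0 = f y0 := hall y0 ⟨hsub hy0I, hy01, hy0w⟩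
  obtain ⟨w', hw', hall'⟩ := hL y0 hy0I
  obtain ⟨z, hz1, hz2⟩ := exists_between (show max x0 w' < y0 from max_lt hy01 hw')
  have hzx0 : x0 < z := lt_of_le_of_lt (le_max_left _ _) hz1
  have hzw' : w' < z := lt_of_le_of_lt (le_max_right _ _) hz1
  have hzI : z ∈ Set.Ioo p q := ⟨lt_trans hx0I.1 hzx0, lt_trans hz2 hy0I.2⟩
  have h1 : f x0 = f z := hall z ⟨hsub hzI, hzx0, lt_trans hz2 hy0w⟩
  have h2 : f y0 ≠ f z := hall' z ⟨hsub hzI, hzw', hz2⟩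
  exact h2 (by rw [← h1, hfy0])

lemma no_interval_left_eq_right_ne (hpq : p < q) (hsub : Set.Ioo p q ⊆ Dset)
    (hL : ∀ x ∈ Set.Ioo p q, ∃ w, w < x ∧ ∀ y, (y ∈ Dset ∧ w < y ∧ y < x) → f x = f y)
    (hR : ∀ x ∈ Set.Ioo p q, ∃ w, x < w ∧ ∀ y, (y ∈ Dset ∧ x < y ∧ y < w) → f x ≠ f y) :
    False := by
  set y0 := (p + q) / 2 with hy0
  have hy0I : y0 ∈ Set.Ioo p q := ⟨by simp only [hy0]; linarith, by simp only [hy0]; linarith⟩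
  obtain ⟨w', hw', hall'⟩ := hL y0 hy0I
  obtain ⟨x0, hx01, hx02⟩ := exists_between (show max p w' < y0 from max_lt hy0I.1 hw')
  have hx0w' : w' < x0 := lt_of_le_of_lt (le_max_right _ _) hx01
  have hx0I : x0 ∈ Set.Ioo p q :=
    ⟨lt_of_le_of_lt (le_max_left _ _) hx01, lt_trans hx02 hy0I.2⟩
  have hfx0 : f y0 = f x0 := hall' x0 ⟨hsub hx0I, hx0w', hx02⟩
  obtain ⟨w, hw, hall⟩ := hR x0 hx0I
  obtain ⟨z, hz1, hz2⟩ := exists_between (show x0 < min y0 w from lt_min hx02 hw)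
  have hzy0 : z < y0 := lt_of_lt_of_le hz2 (min_le_left _ _)
  have hzw : z < w := lt_of_lt_of_le hz2 (min_le_right _ _)
  have hzI : z ∈ Set.Ioo p q := ⟨lt_trans hx0I.1 hz1, lt_trans hzy0 hy0I.2⟩
  have h1 : f y0 = f z := hall' z ⟨hsub hzI, lt_trans hx0w' hz1, hzy0⟩
  have h2 : f x0 ≠ f z := hall z ⟨hsub hzI, hz1, hzw⟩
  exact h2 (by rw [← h1, hfx0])

lemma exists_differentiable_of_monoOn (hpq : p < q)
    (hmono : ∀ x ∈ Set.Ioo p q, ∀ y ∈ Set.Ioo p q, x ≤ y → f x ≤ f y) :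
    ∃ x ∈ Set.Ioo p q, DifferentiableAt ℝ f x := by
  set p' := p + (q - p) / 3 with hp'
  set q' := q - (q - p) / 3 with hq'
  have hpp' : p < p' := by simp only [hp']; linarith
  have hp'q' : p' < q' := by simp only [hp', hq']; linarith
  have hq'q : q' < q := by simp only [hq']; linarith
  set g : ℝ → ℝ := fun t => f (min (max t p') q') with hg
  have hclampI : ∀ t : ℝ, min (max t p') q' ∈ Set.Ioo p q := by
    intro t
    constructor
    · have h1 : p' ≤ max t p' := le_max_right _ _
      have h2 : p' ≤ q' := le_of_lt hp'q'
      have : p' ≤ min (max t p') q' := le_min h1 h2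
      linarith
    · have : min (max t p') q' ≤ q' := min_le_right _ _
      linarith
  have hgmono : Monotone g := by
    intro s t hst
    exact hmono _ (hclampI s) _ (hclampI t)
      (min_le_min (max_le_max hst (le_refl p')) (le_refl q'))
  have hae := hgmono.ae_differentiableAt
  have hx : ∃ x ∈ Set.Ioo p' q', DifferentiableAt ℝ g x := by
    by_contra hall
    push_neg at hall
    have hsub0 : Set.Ioo p' q' ⊆ {x | ¬ DifferentiableAt ℝ g x} := fun x hx => hall x hx
    have h0 : MeasureTheory.volume {x | ¬ DifferentiableAt ℝ g x} = 0 :=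
      MeasureTheory.ae_iff.1 hae
    have hle := MeasureTheory.measure_mono (μ := MeasureTheory.volume) hsub0
    rw [h0, nonpos_iff_eq_zero, Real.volume_Ioo] at hle
    exact absurd hle (ne_of_gt (ENNReal.ofReal_pos.2 (by linarith)))
  obtain ⟨x, hxI, hgd⟩ := hx
  have hfg : f =ᶠ[nhds x] g := by
    filter_upwards [isOpen_Ioo.mem_nhds hxI] with t ht
    have h1 : max t p' = t := max_eq_left (le_of_lt ht.1)
    have h2 : min t q' = t := min_eq_left (le_of_lt ht.2)
    simp only [hg, h1, h2]
  exact ⟨x, ⟨lt_trans hpp' hxI.1, lt_trans hxI.2 hq'q⟩,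
    (hfg.differentiableAt_iff).2 hgd⟩

lemma exists_differentiable_of_antiOn (hpq : p < q)
    (hanti : ∀ x ∈ Set.Ioo p q, ∀ y ∈ Set.Ioo p q, x ≤ y → f y ≤ f x) :
    ∃ x ∈ Set.Ioo p q, DifferentiableAt ℝ f x := by
  have h := exists_differentiable_of_monoOn (f := fun t => -(f t)) hpq
    (fun x hx y hy hxy => by
      have := hanti x hx y hy hxy
      simp only [neg_le_neg_iff]
      linarith)
  obtain ⟨x, hxI, hd⟩ := h
  refine ⟨x, hxI, ?_⟩
  have h2 : DifferentiableAt ℝ (fun t => -(-(f t))) x := hd.neg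
  simpa only [neg_neg] using h2

end AnalysisCore
end RealStructure

namespace RealStructure
open Set

lemma strip_shape (a b : EReal) :
    IsIntervalOrPt {x : ℝ | a < (x : EReal) ∧ (x : EReal) < b} ∧
    IsOpen {x : ℝ | a < (x : EReal) ∧ (x : EReal) < b} := by
  induction a using EReal.rec with
  | bot =>
      induction b using EReal.rec with
      | bot =>
          have : {x : ℝ | (⊥:EReal) < (x : EReal) ∧ (x : EReal) < ⊥} = ∅ := by
            ext x; simp [not_lt_bot]
          rw [this]
          exact ⟨Or.inr (Or.inr (Or.inr (Or.inr (Or.inr rfl)))), isOpen_empty⟩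
      | coe b' =>
          have : {x : ℝ | (⊥:EReal) < (x : EReal) ∧ (x : EReal) < (b' : EReal)} = Set.Iio b' := by
            ext x; simp [EReal.bot_lt_coe, EReal.coe_lt_coe_iff]
          rw [this]
          exact ⟨Or.inr (Or.inr (Or.inr (Or.inl ⟨b', rfl⟩))), isOpen_Iio⟩
      | top =>
          have : {x : ℝ | (⊥:EReal) < (x : EReal) ∧ (x : EReal) < ⊤} = Set.univ := by
            ext x; simp [EReal.bot_lt_coe, EReal.coe_lt_top]
          rw [this]
          exact ⟨Or.inr (Or.inr (Or.inr (Or.inr (Or.inl rfl)))), isOpen_univ⟩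
  | coe a' =>
      induction b using EReal.rec with
      | bot =>
          have : {x : ℝ | (a' : EReal) < (x : EReal) ∧ (x : EReal) < ⊥} = ∅ := by
            ext x; simp [not_lt_bot]
          rw [this]
          exact ⟨Or.inr (Or.inr (Or.inr (Or.inr (Or.inr rfl)))), isOpen_empty⟩
      | coe b' =>
          have : {x : ℝ | (a' : EReal) < (x : EReal) ∧ (x : EReal) < (b' : EReal)}
              = Set.Ioo a' b' := by
            ext x; simp [EReal.coe_lt_coe_iff, Set.mem_Ioo]
          rw [this]
          exact ⟨Or.inr (Or.inl ⟨a', b', rfl⟩), isOpen_Ioo⟩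
      | top =>
          have : {x : ℝ | (a' : EReal) < (x : EReal) ∧ (x : EReal) < ⊤} = Set.Ioi a' := by
            ext x; simp [EReal.coe_lt_coe_iff, EReal.coe_lt_top]
          rw [this]
          exact ⟨Or.inr (Or.inr (Or.inl ⟨a', rfl⟩)), isOpen_Ioi⟩
  | top =>
      have : {x : ℝ | (⊤:EReal) < (x : EReal) ∧ (x : EReal) < b} = ∅ := by
        ext x; simp [not_top_lt]
      rw [this]
      exact ⟨Or.inr (Or.inr (Or.inr (Or.inr (Or.inr rfl)))), isOpen_empty⟩

lemma ioo_not_finite {c d : ℝ} (hcd : c < d) : ¬ (Set.Ioo c d).Finite := by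
  intro h
  have h0 := h.measure_zero MeasureTheory.volume
  rw [Real.volume_Ioo] at h0
  exact absurd h0 (ne_of_gt (ENNReal.ofReal_pos.2 (by linarith)))

end RealStructure


open RealStructure in
set_option maxHeartbeats 1000000 in
/-- In an o-minimal structure `S` on the real field, a function `f : (a,b) → ℝ` belonging
to `S` is differentiable at all but finitely many points of `(a,b)`. -/
theorem ominimal_differentiable_off_finite
    (S : RealStructure) (hS : S.IsOMinimal)
    (a b : EReal) (hab : a < b) (f : ℝ → ℝ)
    (hf : S.Fn1dIn {x : ℝ | a < (x : EReal) ∧ (x : EReal) < b} f) :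
    {x : ℝ | (a < (x : EReal) ∧ (x : EReal) < b) ∧ ¬ DifferentiableAt ℝ f x}.Finite := by
  classical
  set Dset := {x : ℝ | a < (x : EReal) ∧ (x : EReal) < b} with hDdef
  obtain ⟨hDint, hDopen⟩ := strip_shape a b
  have hDF : IsFUIP Dset := IsFUIP.of_interval hDint
  have hgraph : S.DefPred 2 (fun z => z 0 ∈ Dset ∧ f (z 0) = z 1) := hf
  set N := {x : ℝ | x ∈ Dset ∧ ¬ DifferentiableAt ℝ f x} with hN
  show N.Finite
  by_contra hinf
  -- N is definable, hence a finite union of intervals and points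
  have hNdef : S.DefPred 1 (fun z => z 0 ∈ N) := by
    have h1 := (defPred_mem hS hDF (0 : Fin 1)).and (defPred_phiDiff hS hgraph hDF).not
    refine h1.congr (fun z => ?_)
    constructor
    · rintro ⟨hzD, hnphi⟩
      exact ⟨hzD, fun hd => hnphi ((phiDiff_iff hDopen hzD).2 hd)⟩
    · rintro ⟨hzD, hnd⟩
      exact ⟨hzD, fun hphi => hnd ((phiDiff_iff hDopen hzD).1 hphi)⟩
  have hNF : IsFUIP N := (hS N).1 hNdef
  rcases hNF.finite_or_interval with h | ⟨c, d, hcd, hsubN⟩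
  · exact hinf h
  have hsubD : Set.Ioo c d ⊆ Dset := fun z hz => (hsubN hz).1
  -- the germ relations
  set rel : Fin 3 → (ℝ → ℝ → Prop) := ![fun u v => u < v, Eq, fun u v => v < u] with hrel
  have hreldef : ∀ i, S.DefPred 2 (fun z => rel i (z 0) (z 1)) := by
    intro i
    fin_cases i
    · exact defPred_ltIdx hS 0 1
    · exact defPred_eqIdx 0 1
    · exact defPred_ltIdx hS 1 0
  set ER : Fin 3 → Set ℝ := fun i => {x | x ∈ Dset ∧ ∃ w, x < w ∧
      ∀ y, (y ∈ Dset ∧ x < y ∧ y < w) → rel i (f x) (f y)} with hER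
  set EL : Fin 3 → Set ℝ := fun i => {x | x ∈ Dset ∧ ∃ w, w < x ∧
      ∀ y, (y ∈ Dset ∧ w < y ∧ y < x) → rel i (f x) (f y)} with hEL
  have hERdef : ∀ i, S.DefPred 1 (fun z => z 0 ∈ ER i) := fun i =>
    defPred_rightClass hS hgraph hDF (hreldef i)
  have hELdef : ∀ i, S.DefPred 1 (fun z => z 0 ∈ EL i) := fun i =>
    defPred_leftClass hS hgraph hDF (hreldef i)
  -- covering of Ioo c d by the nine classes
  have hcover : ∀ x ∈ Set.Ioo c d, (∃ i, x ∈ ER i) ∧ (∃ j, x ∈ EL j) := by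
    intro x hx
    have hxD : x ∈ Dset := hsubD hx
    obtain ⟨δ, hδpos, hball⟩ := Metric.isOpen_iff.1 hDopen x hxD
    rw [Real.ball_eq_Ioo] at hball
    have hBF : ∀ i : Fin 3, IsFUIP (![Set.Ioi (f x), {f x}, Set.Iio (f x)] i) := by
      intro i; fin_cases i
      · exact isFUIP_Ioi (f x)
      · exact isFUIP_singleton (f x)
      · exact isFUIP_Iio (f x)
    have hrelB : ∀ (i : Fin 3) (v : ℝ), v ∈ (![Set.Ioi (f x), {f x}, Set.Iio (f x)] i)
        → rel i (f x) v := by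
      intro i v hv
      fin_cases i
      · exact hv
      · exact (Set.mem_singleton_iff.1 hv).symm
      · exact hv
    constructor
    · -- right germ
      have hAF : ∀ i : Fin 3, IsFUIP {y : ℝ | y ∈ Dset ∧ y ∈ Set.Ioi x ∧
          f y ∈ (![Set.Ioi (f x), {f x}, Set.Iio (f x)] i)} := fun i =>
        (hS _).1 (defPred_fiber hS hgraph x (hBF i))
      by_contra hno
      push_neg at hno
      have hnosub : ∀ i : Fin 3, ∀ ε > 0, ¬ (Set.Ioo x (x + ε) ⊆ {y : ℝ | y ∈ Dset ∧
          y ∈ Set.Ioi x ∧ f y ∈ (![Set.Ioi (f x), {f x}, Set.Iio (f x)] i)}) := by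
        intro i ε hε hsub'
        refine hno i ⟨hxD, x + ε, by linarith, ?_⟩
        rintro y ⟨hyD, hy1, hy2⟩
        exact hrelB i (f y) (hsub' ⟨hy1, hy2⟩).2.2
      have hgerm : ∀ i : Fin 3, ∃ ε > 0, Set.Ioo x (x + ε) ∩ {y : ℝ | y ∈ Dset ∧
          y ∈ Set.Ioi x ∧ f y ∈ (![Set.Ioi (f x), {f x}, Set.Iio (f x)] i)} = ∅ := by
        intro i
        rcases (hAF i).right_germ x with ⟨ε, hε, hsub'⟩ | hemp
        · exact absurd hsub' (hnosub i ε hε)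
        · exact hemp
      obtain ⟨ε0, hε0, he0⟩ := hgerm 0
      obtain ⟨ε1, hε1, he1⟩ := hgerm 1
      obtain ⟨ε2, hε2, he2⟩ := hgerm 2
      set η := min (min ε0 (min ε1 ε2)) δ with hη
      have hηpos : 0 < η := lt_min (lt_min hε0 (lt_min hε1 hε2)) hδpos
      have hηb : η ≤ ε0 ∧ η ≤ ε1 ∧ η ≤ ε2 ∧ η ≤ δ := by
        refine ⟨?_, ?_, ?_, min_le_right _ _⟩ <;>
        · have h1 := min_le_left (min ε0 (min ε1 ε2)) δ
          have h2 := min_le_left ε0 (min ε1 ε2)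
          have h3 := min_le_right ε0 (min ε1 ε2)
          have h4 := min_le_left ε1 ε2
          have h5 := min_le_right ε1 ε2
          linarith
      set y := x + η / 2 with hy
      have hxy : x < y := by simp only [hy]; linarith
      have hyδ : y ∈ Set.Ioo (x - δ) (x + δ) := by
        constructor <;> simp only [hy] <;> linarith [hηb.2.2.2]
      have hyD : y ∈ Dset := hball hyδ
      rcases lt_trichotomy (f x) (f y) with h | h | h
      · have hmem : y ∈ Set.Ioo x (x + ε0) ∩ {y : ℝ | y ∈ Dset ∧
            y ∈ Set.Ioi x ∧ f y ∈ (![Set.Ioi (f x), {f x}, Set.Iio (f x)] 0)} :=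
          ⟨⟨hxy, by simp only [hy]; linarith [hηb.1]⟩, hyD, hxy, h⟩
        rw [he0] at hmem; exact hmem
      · have hmem : y ∈ Set.Ioo x (x + ε1) ∩ {y : ℝ | y ∈ Dset ∧
            y ∈ Set.Ioi x ∧ f y ∈ (![Set.Ioi (f x), {f x}, Set.Iio (f x)] 1)} :=
          ⟨⟨hxy, by simp only [hy]; linarith [hηb.2.1]⟩, hyD, hxy,
            Set.mem_singleton_iff.2 h.symm⟩
        rw [he1] at hmem; exact hmem
      · have hmem : y ∈ Set.Ioo x (x + ε2) ∩ {y : ℝ | y ∈ Dset ∧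
            y ∈ Set.Ioi x ∧ f y ∈ (![Set.Ioi (f x), {f x}, Set.Iio (f x)] 2)} :=
          ⟨⟨hxy, by simp only [hy]; linarith [hηb.2.2.1]⟩, hyD, hxy, h⟩
        rw [he2] at hmem; exact hmem
    · -- left germ
      have hAF : ∀ i : Fin 3, IsFUIP {y : ℝ | y ∈ Dset ∧ y ∈ Set.Iio x ∧
          f y ∈ (![Set.Ioi (f x), {f x}, Set.Iio (f x)] i)} := fun i =>
        (hS _).1 (defPred_fiber_left hS hgraph x (hBF i))
      by_contra hno
      push_neg at hno
      have hnosub : ∀ i : Fin 3, ∀ ε > 0, ¬ (Set.Ioo (x - ε) x ⊆ {y : ℝ | y ∈ Dset ∧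
          y ∈ Set.Iio x ∧ f y ∈ (![Set.Ioi (f x), {f x}, Set.Iio (f x)] i)}) := by
        intro i ε hε hsub'
        refine hno i ⟨hxD, x - ε, by linarith, ?_⟩
        rintro y ⟨hyD, hy1, hy2⟩
        exact hrelB i (f y) (hsub' ⟨hy1, hy2⟩).2.2
      have hgerm : ∀ i : Fin 3, ∃ ε > 0, Set.Ioo (x - ε) x ∩ {y : ℝ | y ∈ Dset ∧
          y ∈ Set.Iio x ∧ f y ∈ (![Set.Ioi (f x), {f x}, Set.Iio (f x)] i)} = ∅ := by
        intro i
        rcases (hAF i).left_germ x with ⟨ε, hε, hsub'⟩ | hemp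
        · exact absurd hsub' (hnosub i ε hε)
        · exact hemp
      obtain ⟨ε0, hε0, he0⟩ := hgerm 0
      obtain ⟨ε1, hε1, he1⟩ := hgerm 1
      obtain ⟨ε2, hε2, he2⟩ := hgerm 2
      set η := min (min ε0 (min ε1 ε2)) δ with hη
      have hηpos : 0 < η := lt_min (lt_min hε0 (lt_min hε1 hε2)) hδpos
      have hηb : η ≤ ε0 ∧ η ≤ ε1 ∧ η ≤ ε2 ∧ η ≤ δ := by
        refine ⟨?_, ?_, ?_, min_le_right _ _⟩ <;>
        · have h1 := min_le_left (min ε0 (min ε1 ε2)) δ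
          have h2 := min_le_left ε0 (min ε1 ε2)
          have h3 := min_le_right ε0 (min ε1 ε2)
          have h4 := min_le_left ε1 ε2
          have h5 := min_le_right ε1 ε2
          linarith
      set y := x - η / 2 with hy
      have hxy : y < x := by simp only [hy]; linarith
      have hyδ : y ∈ Set.Ioo (x - δ) (x + δ) := by
        constructor <;> simp only [hy] <;> linarith [hηb.2.2.2]
      have hyD : y ∈ Dset := hball hyδ
      rcases lt_trichotomy (f x) (f y) with h | h | h
      · have hmem : y ∈ Set.Ioo (x - ε0) x ∩ {y : ℝ | y ∈ Dset ∧
            y ∈ Set.Iio x ∧ f y ∈ (![Set.Ioi (f x), {f x}, Set.Iio (f x)] 0)} :=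
          ⟨⟨by simp only [hy]; linarith [hηb.1], hxy⟩, hyD, hxy, h⟩
        rw [he0] at hmem; exact hmem
      · have hmem : y ∈ Set.Ioo (x - ε1) x ∩ {y : ℝ | y ∈ Dset ∧
            y ∈ Set.Iio x ∧ f y ∈ (![Set.Ioi (f x), {f x}, Set.Iio (f x)] 1)} :=
          ⟨⟨by simp only [hy]; linarith [hηb.2.1], hxy⟩, hyD, hxy,
            Set.mem_singleton_iff.2 h.symm⟩
        rw [he1] at hmem; exact hmem
      · have hmem : y ∈ Set.Ioo (x - ε2) x ∩ {y : ℝ | y ∈ Dset ∧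
            y ∈ Set.Iio x ∧ f y ∈ (![Set.Ioi (f x), {f x}, Set.Iio (f x)] 2)} :=
          ⟨⟨by simp only [hy]; linarith [hηb.2.2.1], hxy⟩, hyD, hxy, h⟩
        rw [he2] at hmem; exact hmem
  -- one of the nine pieces is infinite
  set P : Fin 3 → Fin 3 → Set ℝ := fun i j => ER i ∩ EL j ∩ Set.Ioo c d with hP
  have hPF : ∀ i j, IsFUIP (P i j) := by
    intro i j
    refine (hS _).1 ?_
    have h1 := (hERdef i).and ((hELdef j).and (defPred_mem hS (isFUIP_Ioo c d) (0 : Fin 1)))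
    refine h1.congr (fun z => ?_)
    constructor
    · rintro ⟨h1, h2, h3⟩; exact ⟨⟨h1, h2⟩, h3⟩
    · rintro ⟨⟨h1, h2⟩, h3⟩; exact ⟨h1, h2, h3⟩
  have hPinf : ∃ i j, ¬ (P i j).Finite := by
    by_contra hall
    push_neg at hall
    have hcdsub : Set.Ioo c d ⊆ ⋃ i : Fin 3, ⋃ j : Fin 3, P i j := by
      intro x hx
      obtain ⟨⟨i, hi⟩, ⟨j, hj⟩⟩ := hcover x hx
      exact Set.mem_iUnion.2 ⟨i, Set.mem_iUnion.2 ⟨j, ⟨hi, hj⟩, hx⟩⟩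
    have hfin : (⋃ i : Fin 3, ⋃ j : Fin 3, P i j).Finite :=
      Set.finite_iUnion (fun i => Set.finite_iUnion (fun j => hall i j))
    exact ioo_not_finite hcd (hfin.subset hcdsub)
  obtain ⟨i, j, hij⟩ := hPinf
  rcases (hPF i j).finite_or_interval with h | ⟨p, q, hpq, hsubP⟩
  · exact hij h
  have hsubER : Set.Ioo p q ⊆ ER i := fun z hz => (hsubP hz).1.1
  have hsubEL : Set.Ioo p q ⊆ EL j := fun z hz => (hsubP hz).1.2
  have hsubcd : Set.Ioo p q ⊆ Set.Ioo c d := fun z hz => (hsubP hz).2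
  have hsubNpq : Set.Ioo p q ⊆ N := fun z hz => hsubN (hsubcd hz)
  have hsubDpq : Set.Ioo p q ⊆ Dset := fun z hz => (hsubNpq hz).1
  -- helper : no point of Ioo p q is differentiable
  have hnodiff : ∀ x ∈ Set.Ioo p q, ¬ DifferentiableAt ℝ f x := fun x hx => (hsubNpq hx).2
  -- case analysis on the pair (i, j)
  have hmid : (p + q) / 2 ∈ Set.Ioo p q := ⟨by linarith, by linarith⟩
  fin_cases i <;> fin_cases j
  -- (0,0) : strict local min everywhere
  · exact no_strict_local_min hpq hsubDpq (fun x hx =>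
      ⟨(hsubER hx).2, (hsubEL hx).2⟩)
  -- (0,1) : left constant, right strictly bigger
  · refine no_interval_left_eq_right_ne hpq hsubDpq
      (fun x hx => (hsubEL hx).2) (fun x hx => ?_)
    obtain ⟨w, hw, hall⟩ := (hsubER hx).2
    exact ⟨w, hw, fun y hy => ne_of_lt (hall y hy)⟩
  -- (0,2) : increasing through
  · have hmono := strictMonoOn_of_classes hpq hsubDpq
      (fun x hx => (hsubER hx).2) (fun x hx => (hsubEL hx).2)
    obtain ⟨x, hxI, hd⟩ := exists_differentiable_of_monoOn hpq (fun x hx y hy hxy => by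
      rcases eq_or_lt_of_le hxy with rfl | h
      · exact le_refl _
      · exact le_of_lt (hmono hx hy h))
    exact hnodiff x hxI hd
  -- (1,0) : right constant, left strictly bigger
  · refine no_interval_right_eq_left_ne hpq hsubDpq
      (fun x hx => (hsubER hx).2) (fun x hx => ?_)
    obtain ⟨w, hw, hall⟩ := (hsubEL hx).2
    exact ⟨w, hw, fun y hy => ne_of_lt (hall y hy)⟩
  -- (1,1) : constant
  · have hconst := constOn_of_classes hpq hsubDpq
      (fun x hx => (hsubER hx).2) (fun x hx => (hsubEL hx).2)
    have hfg : f =ᶠ[nhds ((p + q) / 2)] (fun _ => f ((p + q) / 2)) := by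
      filter_upwards [isOpen_Ioo.mem_nhds hmid] with t ht
      exact hconst t ht ((p + q) / 2) hmid
    exact hnodiff _ hmid ((hfg.differentiableAt_iff).2 (differentiableAt_const _))
  -- (1,2) : right constant, left strictly smaller
  · refine no_interval_right_eq_left_ne hpq hsubDpq
      (fun x hx => (hsubER hx).2) (fun x hx => ?_)
    obtain ⟨w, hw, hall⟩ := (hsubEL hx).2
    exact ⟨w, hw, fun y hy => (ne_of_lt (hall y hy)).symm⟩
  -- (2,0) : decreasing through
  · have hmono := strictMonoOn_of_classes (f := fun t => -(f t)) hpq hsubDpq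
      (fun x hx => by
        obtain ⟨w, hw, hall⟩ := (hsubER hx).2
        exact ⟨w, hw, fun y hy => by
          have h' : f y < f x := hall y hy
          simp only [neg_lt_neg_iff]; linarith⟩)
      (fun x hx => by
        obtain ⟨w, hw, hall⟩ := (hsubEL hx).2
        exact ⟨w, hw, fun y hy => by
          have h' : f x < f y := hall y hy
          simp only [neg_lt_neg_iff]; linarith⟩)
    obtain ⟨x, hxI, hd⟩ := exists_differentiable_of_antiOn hpq (fun x hx y hy hxy => by
      rcases eq_or_lt_of_le hxy with rfl | h
      · exact le_refl _
      · have := hmono hx hy h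
        simp only [neg_lt_neg_iff] at this
        linarith)
    exact hnodiff x hxI hd
  -- (2,1) : left constant, right strictly smaller
  · refine no_interval_left_eq_right_ne hpq hsubDpq
      (fun x hx => (hsubEL hx).2) (fun x hx => ?_)
    obtain ⟨w, hw, hall⟩ := (hsubER hx).2
    exact ⟨w, hw, fun y hy => (ne_of_lt (hall y hy)).symm⟩
  -- (2,2) : strict local max everywhere
  · exact no_strict_local_max hpq hsubDpq (fun x hx =>
      ⟨(hsubER hx).2, (hsubEL hx).2⟩)
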